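/- Single crossing of marginal utility implies strict single crossing of differences: let U : X × Θ → ℝ with X, Θ ⊆ ℝ, U differentiable and quasiconcave in x, and U₁(·,·) SC1 in θ for each x. Fix θ̂ > θ and x̂ > x with U(x̂,θ) ≥ U(x',θ) for all x' ∈ [x,x̂] ∩ X. If additionally U(x̂,θ) > U(x,θ), then U(x̂,θ̂) > U(x,θ̂). -/
import Mathlib

open Set Filter Topology

/-- Strict single crossing of differences: under quasiconcavity and
differentiability in `x` and SC1 of `U₁` in `θ`, if `x̂` maximizes `U(·,θ)` on
`[x,x̂] ∩ X` and `U(x̂,θ) > U(x,θ)`, then `U(x̂,θ̂) > U(x,θ̂)` for `θ̂ > θ`. -/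
theorem stmt_19 (X Θ : Set ℝ) (U : ℝ → ℝ → ℝ)
    (hqc : ∀ θ ∈ Θ, QuasiconcaveOn ℝ X (fun x => U x θ))
    (hdiff : ∀ θ ∈ Θ, ∀ x ∈ X, DifferentiableAt ℝ (fun x' => U x' θ) x)
    (hSC1 : ∀ x ∈ X, ∀ θ ∈ Θ, ∀ θ' ∈ Θ, θ < θ' →
      (0 ≤ deriv (fun x' => U x' θ) x → 0 ≤ deriv (fun x' => U x' θ') x) ∧
      (0 < deriv (fun x' => U x' θ) x → 0 < deriv (fun x' => U x' θ') x))
    (x xhat θ θhat : ℝ) (hxX : x ∈ X) (hxhatX : xhat ∈ X)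
    (hθ : θ ∈ Θ) (hθhat : θhat ∈ Θ) (hθθ : θ < θhat) (hxx : x < xhat)
    (hmax : ∀ x' ∈ X, x ≤ x' → x' ≤ xhat → U x' θ ≤ U xhat θ)
    (hstrict : U x θ < U xhat θ) :
    U x θhat < U xhat θhat := by
  set f : ℝ → ℝ := fun x' => U x' θ with hf
  set g : ℝ → ℝ := fun x' => U x' θhat with hg
  -- the whole interval is inside X
  have hIccX : Icc x xhat ⊆ X := by
    intro y hy
    have := ((hqc θ hθ (f x)).ordConnected.out
      (⟨hxX, le_refl _⟩ : x ∈ {z ∈ X | f x ≤ f z})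
      (⟨hxhatX, hstrict.le⟩ : xhat ∈ {z ∈ X | f x ≤ f z})) hy
    exact this.1
  -- xhat maximizes f on [x', xhat] for any x' in [x, xhat]
  have hmin : ∀ x' ∈ Icc x xhat, ∀ y ∈ Icc x' xhat, f x' ≤ f y := by
    intro x' hx' y hy
    have hx'X := hIccX hx'
    have hhat : f x' ≤ f xhat := hmax x' hx'X hx'.1 hx'.2
    exact (((hqc θ hθ (f x')).ordConnected.out
      (⟨hx'X, le_refl _⟩ : x' ∈ {z ∈ X | f x' ≤ f z})
      (⟨hxhatX, hhat⟩ : xhat ∈ {z ∈ X | f x' ≤ f z})) hy).2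
  -- f' nonneg on [x, xhat)
  have hf'nonneg : ∀ x' ∈ Ico x xhat, 0 ≤ deriv f x' := by
    intro x' hx'
    have hx'X := hIccX ⟨hx'.1, hx'.2.le⟩
    have hd : HasDerivWithinAt f (deriv f x') (Ioi x') x' :=
      ((hdiff θ hθ x' hx'X).hasDerivAt).hasDerivWithinAt
    rw [hasDerivWithinAt_iff_tendsto_slope' (notMem_Ioi.2 le_rfl)] at hd
    refine ge_of_tendsto hd ?_
    filter_upwards [Ioo_mem_nhdsGT_of_mem ⟨le_refl x', hx'.2⟩] with y hy
    rw [slope_def_field]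
    have hle : f x' ≤ f y :=
      hmin x' ⟨hx'.1, hx'.2.le⟩ y ⟨hy.1.le, hy.2.le⟩
    exact div_nonneg (by linarith) (by linarith [hy.1])
  -- continuity and differentiability of both sections on the interval
  have hcf : ContinuousOn f (Icc x xhat) := fun y hy =>
    ((hdiff θ hθ y (hIccX hy)).continuousAt).continuousWithinAt
  have hdf : DifferentiableOn ℝ f (Ioo x xhat) := fun y hy =>
    ((hdiff θ hθ y (hIccX ⟨hy.1.le, hy.2.le⟩))).differentiableWithinAt
  have hcg : ContinuousOn g (Icc x xhat) := fun y hy =>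
    ((hdiff θhat hθhat y (hIccX hy)).continuousAt).continuousWithinAt
  -- g' nonneg on (x, xhat)
  have hg'nonneg : ∀ y ∈ Ioo x xhat, 0 ≤ deriv g y := by
    intro y hy
    exact (hSC1 y (hIccX ⟨hy.1.le, hy.2.le⟩) θ hθ θhat hθhat hθθ).1
      (hf'nonneg y ⟨hy.1.le, hy.2⟩)
  -- g monotone on [x, xhat]
  have hmono : MonotoneOn g (Icc x xhat) := by
    apply monotoneOn_of_deriv_nonneg (convex_Icc x xhat) hcg
    · rw [interior_Icc]
      exact fun y hy => (hdiff θhat hθhat y (hIccX ⟨hy.1.le, hy.2.le⟩)).differentiableWithinAt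
    · rw [interior_Icc]; exact hg'nonneg
  -- MVT: a point with positive derivative of f
  obtain ⟨c, hc, hc'⟩ := exists_deriv_eq_slope f hxx hcf hdf
  have hfc'pos : 0 < deriv f c := by
    rw [hc']
    exact div_pos (by linarith) (by linarith [hc.1, hc.2])
  have hgc'pos : 0 < deriv g c :=
    (hSC1 c (hIccX ⟨hc.1.le, hc.2.le⟩) θ hθ θhat hθhat hθθ).2 hfc'pos
  -- from positive derivative of g at c, find y ∈ (c, xhat) with g c < g y
  have hdg : HasDerivWithinAt g (deriv g c) (Ioi c) c :=
    ((hdiff θhat hθhat c (hIccX ⟨hc.1.le, hc.2.le⟩)).hasDerivAt).hasDerivWithinAt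
  rw [hasDerivWithinAt_iff_tendsto_slope' (notMem_Ioi.2 le_rfl)] at hdg
  have hev : ∀ᶠ y in 𝓝[>] c, 0 < slope g c y :=
    hdg.eventually (eventually_gt_nhds hgc'pos)
  have hev2 : ∀ᶠ y in 𝓝[>] c, y ∈ Ioo c xhat :=
    Ioo_mem_nhdsGT_of_mem ⟨le_refl c, hc.2⟩
  obtain ⟨y, hy1, hy2⟩ := (hev.and hev2).exists
  have hgy : g c < g y := by
    rw [slope_def_field] at hy1
    have hyc : 0 < y - c := by linarith [hy2.1]
    rw [lt_div_iff₀ hyc] at hy1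
    linarith
  calc U x θhat = g x := rfl
    _ ≤ g c := hmono (left_mem_Icc.2 hxx.le) ⟨hc.1.le, hc.2.le⟩ hc.1.le
    _ < g y := hgy
    _ ≤ g xhat := hmono ⟨hc.1.le.trans hy2.1.le, hy2.2.le⟩ (right_mem_Icc.2 hxx.le) hy2.2.le
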